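/- Let R be a commutative ring with unity and n ≥ 2. For every M ∈ M_n(R) and prime p and integer s ≥ 1, there exist x_0, ..., x_s ∈ R such that Tr(M^{p^s}) = x_0^{p^s} + p·x_1^{p^{s-1}} + ... + p^s·x_s. -/

import Mathlib

open Matrix Finset

namespace TracePrimePowerAux

variable {S : Type*} [CommRing S] {n : ℕ}

lemma cons_add_one {m : ℕ} (i : Fin n) (g : Fin m → Fin n) (t : Fin (m + 1)) :
    (Fin.cons i g : Fin (m + 1) → Fin n) (t + 1) = (Fin.snoc g i : Fin (m + 1) → Fin n) t := by
  induction t using Fin.lastCases with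
  | last => rw [Fin.last_add_one, Fin.cons_zero, Fin.snoc_last]
  | cast u => rw [Fin.coeSucc_eq_succ, Fin.cons_succ, Fin.snoc_castSucc]

lemma snoc_cons_succ {m : ℕ} (k j : Fin n) (g : Fin m → Fin n) (t : Fin (m + 1)) :
    (Fin.snoc (Fin.cons k g : Fin (m + 1) → Fin n) j : Fin (m + 2) → Fin n) t.succ
      = (Fin.snoc g j : Fin (m + 1) → Fin n) t := by
  induction t using Fin.lastCases with
  | last => rw [Fin.succ_last, Fin.snoc_last, Fin.snoc_last]
  | cast u => rw [Fin.succ_castSucc, Fin.snoc_castSucc, Fin.cons_succ, Fin.snoc_castSucc]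

lemma pow_entry (A : Matrix (Fin n) (Fin n) S) :
    ∀ (m : ℕ) (i j : Fin n), (A ^ (m + 1)) i j
      = ∑ g : Fin m → Fin n, ∏ t : Fin (m + 1),
          A ((Fin.cons i g : Fin (m + 1) → Fin n) t) ((Fin.snoc g j : Fin (m + 1) → Fin n) t) := by
  intro m
  induction m with
  | zero =>
      intro i j
      rw [pow_one]
      have h1 : ∀ g : Fin 0 → Fin n,
          (∏ t : Fin 1, A ((Fin.cons i g : Fin 1 → Fin n) t) ((Fin.snoc g j : Fin 1 → Fin n) t))
            = A i j := by
        intro g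
        rw [Fin.prod_univ_one]
        rw [show (0 : Fin 1) = Fin.last 0 from rfl]
        rw [Fin.snoc_last]
        rfl
      rw [Fintype.sum_subsingleton _ (default : Fin 0 → Fin n), h1]
  | succ m ih =>
      intro i j
      rw [pow_succ']
      rw [Matrix.mul_apply]
      calc ∑ k, A i k * (A ^ (m + 1)) k j
          = ∑ k, ∑ g : Fin m → Fin n,
              A i k * ∏ t : Fin (m + 1),
                A ((Fin.cons k g : Fin (m + 1) → Fin n) t)
                  ((Fin.snoc g j : Fin (m + 1) → Fin n) t) := by
            simp_rw [ih, Finset.mul_sum]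
        _ = ∑ kg : Fin n × (Fin m → Fin n),
              A i kg.1 * ∏ t : Fin (m + 1),
                A ((Fin.cons kg.1 kg.2 : Fin (m + 1) → Fin n) t)
                  ((Fin.snoc kg.2 j : Fin (m + 1) → Fin n) t) := by
            rw [Fintype.sum_prod_type]
        _ = ∑ g : Fin (m + 1) → Fin n, ∏ t : Fin (m + 2),
              A ((Fin.cons i g : Fin (m + 2) → Fin n) t)
                ((Fin.snoc g j : Fin (m + 2) → Fin n) t) := by
            refine Fintype.sum_equiv (Fin.consEquiv (fun _ => Fin n)) _ _ ?_
            rintro ⟨k, g⟩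
            show A i k * (∏ t : Fin (m + 1), A ((Fin.cons k g : Fin (m + 1) → Fin n) t)
                  ((Fin.snoc g j : Fin (m + 1) → Fin n) t))
              = ∏ t : Fin (m + 2), A ((Fin.cons i (Fin.cons k g) : Fin (m + 2) → Fin n) t)
                  ((Fin.snoc (Fin.cons k g : Fin (m + 1) → Fin n) j : Fin (m + 2) → Fin n) t)
            conv_rhs => rw [Fin.prod_univ_succ]
            congr 1
            · exact Finset.prod_congr rfl fun t _ => by rw [Fin.cons_succ, snoc_cons_succ]

lemma trace_pow_cyclic_fin (A : Matrix (Fin n) (Fin n) S) (m : ℕ) :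
    Matrix.trace (A ^ (m + 1))
      = ∑ f : Fin (m + 1) → Fin n, ∏ t : Fin (m + 1), A (f t) (f (t + 1)) := by
  have h : Matrix.trace (A ^ (m + 1)) = ∑ i : Fin n, (A ^ (m + 1)) i i := by
    simp [Matrix.trace, Matrix.diag]
  rw [h]
  calc ∑ i : Fin n, (A ^ (m + 1)) i i
      = ∑ ig : Fin n × (Fin m → Fin n),
          ∏ t : Fin (m + 1),
            A ((Fin.cons ig.1 ig.2 : Fin (m + 1) → Fin n) t)
              ((Fin.snoc ig.2 ig.1 : Fin (m + 1) → Fin n) t) := by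
        simp_rw [pow_entry]
        rw [Fintype.sum_prod_type]
    _ = ∑ f : Fin (m + 1) → Fin n, ∏ t : Fin (m + 1), A (f t) (f (t + 1)) := by
        refine Fintype.sum_equiv (Fin.consEquiv (fun _ => Fin n)) _ _ ?_
        rintro ⟨i, g⟩
        show (∏ t : Fin (m + 1), A ((Fin.cons i g : Fin (m + 1) → Fin n) t)
              ((Fin.snoc g i : Fin (m + 1) → Fin n) t))
          = ∏ t : Fin (m + 1), A ((Fin.cons i g : Fin (m + 1) → Fin n) t)
              ((Fin.cons i g : Fin (m + 1) → Fin n) (t + 1))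
        exact Finset.prod_congr rfl fun t _ => by rw [cons_add_one]

lemma trace_pow_cyclic (A : Matrix (Fin n) (Fin n) S) (m : ℕ) [NeZero m] :
    Matrix.trace (A ^ m) = ∑ f : ZMod m → Fin n, ∏ i : ZMod m, A (f i) (f (i + 1)) := by
  obtain ⟨m', rfl⟩ := Nat.exists_eq_succ_of_ne_zero (NeZero.ne m)
  rw [trace_pow_cyclic_fin]
  have hval : ∀ i : Fin (m' + 1), (((i : ℕ) : ZMod (m' + 1))).val = (i : ℕ) :=
    fun i => ZMod.val_natCast_of_lt i.isLt
  let e : Fin (m' + 1) ≃ ZMod (m' + 1) :=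
    { toFun := fun i => ((i : ℕ) : ZMod (m' + 1))
      invFun := fun z => ⟨z.val, z.val_lt⟩
      left_inv := fun i => by ext; simp [hval]
      right_inv := fun z => ZMod.natCast_rightInverse z }
  have he : ∀ i : Fin (m' + 1), e (i + 1) = e i + 1 := by
    intro i
    show (((i + 1 : Fin (m' + 1)) : ℕ) : ZMod (m' + 1)) = ((i : ℕ) : ZMod (m' + 1)) + 1
    rw [Fin.add_def, ZMod.natCast_mod, Nat.cast_add]
    congr 1
    rw [Fin.val_one', ZMod.natCast_mod, Nat.cast_one]
  apply Fintype.sum_equiv (Equiv.arrowCongr e (Equiv.refl (Fin n)))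
  intro f
  apply Fintype.prod_equiv e
  intro t
  have h1 : (Equiv.arrowCongr e (Equiv.refl (Fin n))) f (e t) = f t := by
    simp [Equiv.arrowCongr]
  have h2 : (Equiv.arrowCongr e (Equiv.refl (Fin n))) f (e t + 1) = f (t + 1) := by
    rw [← he]
    simp [Equiv.arrowCongr]
  rw [h1, h2]

lemma orbit_sum_dvd {α : Type*} [DecidableEq α] {m : ℕ} [NeZero m]
    (rot : ZMod m → α → α) (h0 : ∀ x, rot 0 x = x)
    (hadd : ∀ a b x, rot (a + b) x = rot a (rot b x))
    (t : α → S) (ht : ∀ a x, t (rot a x) = t x) :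
    ∀ s : Finset α, (∀ a, ∀ x ∈ s, rot a x ∈ s) →
      (∀ x ∈ s, ∀ a, a ≠ 0 → rot a x ≠ x) → ((m : ℕ) : S) ∣ ∑ x ∈ s, t x := by
  intro s
  induction s using Finset.strongInduction with
  | _ s ih =>
    intro hcl hfree
    rcases s.eq_empty_or_nonempty with rfl | ⟨x₀, hx₀⟩
    · simp
    · set O : Finset α := Finset.image (fun a : ZMod m => rot a x₀) Finset.univ with hO
      have hcancel : ∀ (a : ZMod m) (x : α), rot (-a) (rot a x) = x := by
        intro a x; rw [← hadd, neg_add_cancel, h0]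
      have hinj : ∀ a ∈ (Finset.univ : Finset (ZMod m)), ∀ b ∈ Finset.univ,
          rot a x₀ = rot b x₀ → a = b := by
        intro a _ b _ hab
        by_contra hne
        have h1 : rot (-b + a) x₀ = x₀ := by
          have h2 := congrArg (rot (-b)) hab
          rw [← hadd] at h2
          rw [h2, hcancel]
        exact hfree x₀ hx₀ (-b + a) (fun h => hne (by linear_combination (norm := abel) h)) h1
      have hOsub : O ⊆ s := by
        intro y hy
        rw [hO, Finset.mem_image] at hy
        obtain ⟨a, _, rfl⟩ := hy
        exact hcl a x₀ hx₀
      have hsum : ∑ x ∈ O, t x = ((m : ℕ) : S) * t x₀ := by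
        rw [hO, Finset.sum_image hinj]
        rw [Finset.sum_congr rfl fun a _ => ht a x₀, Finset.sum_const, Finset.card_univ,
          ZMod.card, nsmul_eq_mul]
      have hx₀O : x₀ ∈ O := by
        rw [hO, Finset.mem_image]
        exact ⟨0, Finset.mem_univ _, h0 x₀⟩
      have hss : s \ O ⊂ s := Finset.sdiff_ssubset hOsub ⟨x₀, hx₀O⟩
      have hOmem : ∀ (a : ZMod m) (x : α), rot a x ∈ O → x ∈ O := by
        intro a x hx
        rw [hO, Finset.mem_image] at hx ⊢
        obtain ⟨b, _, hb⟩ := hx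
        refine ⟨-a + b, Finset.mem_univ _, ?_⟩
        rw [hadd, hb, hcancel]
      have hrec := ih (s \ O) hss (by
          intro a x hx
          rw [Finset.mem_sdiff] at hx ⊢
          exact ⟨hcl a x hx.1, fun hmem => hx.2 (hOmem a x hmem)⟩)
        (fun x hx => hfree x (Finset.mem_sdiff.1 hx).1)
      rw [← Finset.sum_sdiff hOsub]
      exact dvd_add hrec ⟨t x₀, hsum⟩


lemma necklace (p : ℕ) (hp : p.Prime) (A : Matrix (Fin n) (Fin n) S) (k : ℕ) :
    ((p ^ (k + 1) : ℕ) : S) ∣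
      Matrix.trace (A ^ p ^ (k + 1)) - Matrix.trace ((A.map (· ^ p)) ^ p ^ k) := by
  classical
  haveI h₁ : NeZero (p ^ (k + 1)) := ⟨(pow_pos hp.pos _).ne'⟩
  haveI h₀ : NeZero (p ^ k) := ⟨(pow_pos hp.pos _).ne'⟩
  have hdvd : p ^ k ∣ p ^ (k + 1) := pow_dvd_pow p (Nat.le_succ k)
  have hm₀pos : 0 < p ^ k := pow_pos hp.pos k
  rw [trace_pow_cyclic, trace_pow_cyclic]
  set T : (ZMod (p ^ (k + 1)) → Fin n) → S := fun f => ∏ i, A (f i) (f (i + 1)) with hT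
  clear_value T
  let π : ZMod (p ^ (k + 1)) →+* ZMod (p ^ k) := ZMod.castHom hdvd _
  have hπnat : ∀ a : ℕ, π ((a : ZMod (p ^ (k + 1)))) = (a : ZMod (p ^ k)) := fun a => map_natCast π a
  have hvid : ∀ x : ZMod (p ^ (k + 1)), ((x.val : ℕ) : ZMod (p ^ (k + 1))) = x :=
    fun x => ZMod.natCast_rightInverse x
  have hvid₀ : ∀ x : ZMod (p ^ k), ((x.val : ℕ) : ZMod (p ^ k)) = x :=
    fun x => ZMod.natCast_rightInverse x
  have hπval : ∀ x : ZMod (p ^ (k + 1)), π x = ((x.val : ℕ) : ZMod (p ^ k)) := by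
    intro x
    conv_lhs => rw [← hvid x]
    rw [hπnat]
  -- the equiv E
  have hlt : ∀ (j : ZMod (p ^ k)) (t : Fin p), j.val + t.val * p ^ k < p ^ (k + 1) := by
    intro j t
    have h1 : j.val < p ^ k := ZMod.val_lt j
    have h2 : t.val + 1 ≤ p := t.isLt
    calc j.val + t.val * p ^ k < p ^ k + t.val * p ^ k := by omega
      _ = (t.val + 1) * p ^ k := by ring
      _ ≤ p * p ^ k := Nat.mul_le_mul_right _ h2
      _ = p ^ (k + 1) := by ring
  let E : ZMod (p ^ (k + 1)) ≃ ZMod (p ^ k) × Fin p :=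
    { toFun := fun x => (π x, ⟨x.val / p ^ k, by
        have := ZMod.val_lt x
        apply Nat.div_lt_of_lt_mul
        calc x.val < p ^ (k + 1) := ZMod.val_lt x
          _ = p ^ k * p := by ring⟩)
      invFun := fun jt => ((jt.1.val + jt.2.val * p ^ k : ℕ) : ZMod (p ^ (k + 1)))
      left_inv := by
        intro x
        simp only []
        rw [hπval, ZMod.val_natCast, Nat.mod_add_div', hvid]
      right_inv := by
        rintro ⟨j, t⟩
        have hv : ((j.val + t.val * p ^ k : ℕ) : ZMod (p ^ (k + 1))).val
            = j.val + t.val * p ^ k := ZMod.val_natCast_of_lt (hlt j t)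
        have h1 : π ((j.val + t.val * p ^ k : ℕ) : ZMod (p ^ (k + 1))) = j := by
          rw [hπnat, Nat.cast_add, Nat.cast_mul, ZMod.natCast_self, mul_zero, add_zero, hvid₀]
        ext
        · exact h1
        · show ((j.val + t.val * p ^ k : ℕ) : ZMod (p ^ (k + 1))).val / p ^ k = t.val
          rw [hv, Nat.add_mul_div_right _ _ hm₀pos, Nat.div_eq_of_lt (ZMod.val_lt j), zero_add] }
  have hEfst : ∀ x, (E x).1 = π x := fun _ => rfl
  -- periodicity
  set c : ZMod (p ^ (k + 1)) := ((p ^ k : ℕ) : ZMod (p ^ (k + 1))) with hc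
  clear_value c
  set P : (ZMod (p ^ (k + 1)) → Fin n) → Prop := fun f => ∀ i, f (i + c) = f i with hP
  clear_value P
  have hπc : π c = 0 := by rw [hc, hπnat, ZMod.natCast_self]
  have hπ1 : ∀ i, π (i + 1) = π i + 1 := by intro i; rw [map_add, RingHom.map_one]
  have hπsurjval : ∀ j : ZMod (p ^ k), π ((j.val : ℕ) : ZMod (p ^ (k + 1))) = j := by
    intro j; rw [hπnat, hvid₀]
  -- image characterization
  have hmem : ∀ f : ZMod (p ^ (k + 1)) → Fin n,
      P f ↔ f ∈ Finset.image (fun g : ZMod (p ^ k) → Fin n => g ∘ π) Finset.univ := by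
    intro f
    constructor
    · intro hf
      rw [hP] at hf
      rw [Finset.mem_image]
      refine ⟨fun j => f ((j.val : ℕ) : ZMod (p ^ (k + 1))), Finset.mem_univ _, ?_⟩
      funext i
      show f (((π i).val : ℕ) : ZMod (p ^ (k + 1))) = f i
      have hiter : ∀ (t : ℕ) (y : ZMod (p ^ (k + 1))), f (y + (t * p ^ k : ℕ)) = f y := by
        intro t
        induction t with
        | zero => intro y; simp
        | succ t iht =>
            intro y
            have : (((t + 1) * p ^ k : ℕ) : ZMod (p ^ (k + 1)))
                = ((t * p ^ k : ℕ) : ZMod (p ^ (k + 1))) + c := by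
              rw [hc]; push_cast; ring
            rw [this, ← add_assoc, hf, iht]
      have hval : (π i).val = i.val % p ^ k := by rw [hπval, ZMod.val_natCast]
      have hdec : i = (((π i).val : ℕ) : ZMod (p ^ (k + 1))) + ((i.val / p ^ k * p ^ k : ℕ)) := by
        rw [hval, ← Nat.cast_add, Nat.mod_add_div', hvid]
      conv_rhs => rw [hdec]
      rw [hiter]
    · intro hf
      rw [Finset.mem_image] at hf
      obtain ⟨g, _, rfl⟩ := hf
      rw [hP]
      intro i
      show g (π (i + c)) = g (π i)
      rw [map_add, hπc, add_zero]
  -- sum over periodic = low trace side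
  have hιinj : ∀ g₁ ∈ (Finset.univ : Finset (ZMod (p ^ k) → Fin n)), ∀ g₂ ∈ Finset.univ,
      g₁ ∘ π = g₂ ∘ π → g₁ = g₂ := by
    intro g₁ _ g₂ _ h
    funext j
    have := congrFun h ((j.val : ℕ) : ZMod (p ^ (k + 1)))
    simpa [Function.comp, hπsurjval] using this
  have hTperiodic : ∀ g : ZMod (p ^ k) → Fin n,
      T (g ∘ π) = ∏ j : ZMod (p ^ k), (A (g j) (g (j + 1))) ^ p := by
    intro g
    rw [hT]
    have h1 : ∀ i : ZMod (p ^ (k + 1)),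
        A ((g ∘ π) i) ((g ∘ π) (i + 1)) = (fun j => A (g j) (g (j + 1))) (π i) := by
      intro i
      show A (g (π i)) (g (π (i + 1))) = A (g (π i)) (g (π i + 1))
      rw [hπ1]
    calc ∏ i : ZMod (p ^ (k + 1)), A ((g ∘ π) i) ((g ∘ π) (i + 1))
        = ∏ i : ZMod (p ^ (k + 1)), (fun j => A (g j) (g (j + 1))) (π i) :=
          Finset.prod_congr rfl fun i _ => h1 i
      _ = ∏ jt : ZMod (p ^ k) × Fin p, (fun j => A (g j) (g (j + 1))) jt.1 := by
          refine Fintype.prod_equiv E _ _ ?_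
          intro x
          rw [hEfst]
      _ = ∏ j : ZMod (p ^ k), (A (g j) (g (j + 1))) ^ p := by
          rw [Fintype.prod_prod_type]
          exact Finset.prod_congr rfl fun j _ => by
            simp [Finset.prod_const]
  -- rotation
  set rot : ZMod (p ^ (k + 1)) → (ZMod (p ^ (k + 1)) → Fin n) → (ZMod (p ^ (k + 1)) → Fin n) :=
    fun a f i => f (i + a) with hrot
  clear_value rot
  have hrot0 : ∀ f, rot 0 f = f := by intro f; funext i; simp [hrot]
  have hrotadd : ∀ a b f, rot (a + b) f = rot a (rot b f) := by
    intro a b f; funext i; simp [hrot, add_assoc]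
  have hrotT : ∀ a f, T (rot a f) = T f := by
    intro a f
    rw [hT]
    refine Fintype.prod_equiv (Equiv.addRight a) _ _ ?_
    intro x
    simp only [hrot, Equiv.coe_addRight]
    rw [add_right_comm]
  -- freeness on the non-periodic part
  have hfree : ∀ f ∈ Finset.univ.filter (fun f => ¬ P f), ∀ a, a ≠ 0 → rot a f ≠ f := by
    intro f hf a ha hrota
    rw [Finset.mem_filter] at hf
    apply hf.2
    rw [hP]
    have hstep : ∀ i, f (i + a) = f i := by
      intro i
      have h := congrFun hrota i
      simp only [hrot] at h
      exact h
    have hiter : ∀ (t : ℕ) (i), f (i + (t : ZMod (p ^ (k + 1))) * a) = f i := by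
      intro t
      induction t with
      | zero => intro i; simp
      | succ t iht =>
          intro i
          have h2 : ((t + 1 : ℕ) : ZMod (p ^ (k + 1))) * a
              = (t : ZMod (p ^ (k + 1))) * a + a := by push_cast; ring
          rw [h2, ← add_assoc, hstep, iht]
    have hvalne : a.val ≠ 0 := fun h => ha ((ZMod.val_eq_zero a).1 h)
    set d := Nat.gcd a.val (p ^ (k + 1)) with hd
    have hddvd : d ∣ p ^ (k + 1) := Nat.gcd_dvd_right _ _
    obtain ⟨j, hj, hdj⟩ := (Nat.dvd_prime_pow hp).1 hddvd
    have hjk : j ≤ k := by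
      by_contra hcon
      have hjeq : j = k + 1 := le_antisymm hj (by omega)
      have h1 : p ^ (k + 1) ∣ a.val := by
        have h2 := Nat.gcd_dvd_left a.val (p ^ (k + 1))
        rw [← hd, hdj, hjeq] at h2
        exact h2
      have := Nat.le_of_dvd (Nat.pos_of_ne_zero hvalne) h1
      exact absurd (ZMod.val_lt a) (by omega)
    have hdm₀ : d ∣ p ^ k := hdj ▸ pow_dvd_pow p hjk
    have hbez : (d : ZMod (p ^ (k + 1)))
        = a * ((Nat.gcdA a.val (p ^ (k + 1)) : ℤ) : ZMod (p ^ (k + 1))) := by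
      have h := Nat.gcd_eq_gcd_ab a.val (p ^ (k + 1))
      have h2 := congrArg (fun z : ℤ => (z : ZMod (p ^ (k + 1)))) h
      push_cast at h2
      have hzz : ((p : ZMod (p ^ (k + 1)))) ^ (k + 1) = 0 := by
        have h3 := ZMod.natCast_self (p ^ (k + 1))
        push_cast at h3
        exact h3
      rw [hzz, zero_mul, add_zero, hvid a] at h2
      rw [hd]
      exact h2
    have hcz : c = a * (((Nat.gcdA a.val (p ^ (k + 1)) : ℤ) : ZMod (p ^ (k + 1)))
        * ((p ^ k / d : ℕ) : ZMod (p ^ (k + 1)))) := by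
      have h2 : (p ^ k : ℕ) = d * (p ^ k / d) := (Nat.mul_div_cancel' hdm₀).symm
      rw [hc]
      calc ((p ^ k : ℕ) : ZMod (p ^ (k + 1)))
          = ((d * (p ^ k / d) : ℕ) : ZMod (p ^ (k + 1))) := by rw [← h2]
        _ = (d : ZMod (p ^ (k + 1))) * ((p ^ k / d : ℕ) : ZMod (p ^ (k + 1))) := by push_cast; ring
        _ = _ := by rw [hbez]; ring
    intro i
    set z := ((Nat.gcdA a.val (p ^ (k + 1)) : ℤ) : ZMod (p ^ (k + 1)))
        * ((p ^ k / d : ℕ) : ZMod (p ^ (k + 1))) with hz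
    clear_value z
    have h3 : c = (z.val : ZMod (p ^ (k + 1))) * a := by
      rw [hvid z, hcz, hz]; ring
    rw [h3, hiter]
  -- closure
  have hclosed : ∀ a, ∀ f ∈ Finset.univ.filter (fun f => ¬ P f), rot a f ∈
      Finset.univ.filter (fun f => ¬ P f) := by
    intro a f hf
    rw [Finset.mem_filter] at hf ⊢
    refine ⟨Finset.mem_univ _, fun hPr => hf.2 ?_⟩
    rw [hP] at hPr
    rw [hP]
    intro i
    have := hPr (i - a)
    simp only [hrot] at this
    rw [show i - a + c + a = i + c by ring, show i - a + a = i by ring] at this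
    exact this
  have hnp : ((p ^ (k + 1) : ℕ) : S) ∣ ∑ f ∈ Finset.univ.filter (fun f => ¬ P f), T f :=
    orbit_sum_dvd rot hrot0 hrotadd T hrotT _ hclosed hfree
  -- assembly
  have hsplit := Finset.sum_filter_add_sum_filter_not Finset.univ P T
  have hper : ∑ f ∈ Finset.univ.filter P, T f
      = ∑ g : ZMod (p ^ k) → Fin n, ∏ j : ZMod (p ^ k), (A (g j) (g (j + 1))) ^ p := by
    have himg : Finset.univ.filter P
        = Finset.image (fun g : ZMod (p ^ k) → Fin n => g ∘ π) Finset.univ := by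
      ext f
      rw [Finset.mem_filter]
      constructor
      · intro h; exact (hmem f).1 h.2
      · intro h; exact ⟨Finset.mem_univ _, (hmem f).2 h⟩
    rw [himg, Finset.sum_image hιinj]
    exact Finset.sum_congr rfl fun g _ => hTperiodic g
  have hlow : ∑ g : ZMod (p ^ k) → Fin n,
      ∏ j : ZMod (p ^ k), (A.map (· ^ p)) (g j) (g (j + 1))
      = ∑ g : ZMod (p ^ k) → Fin n, ∏ j : ZMod (p ^ k), (A (g j) (g (j + 1))) ^ p := by
    exact Finset.sum_congr rfl fun g _ => Finset.prod_congr rfl fun j _ => rfl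
  rw [hlow, ← hper, ← hsplit]
  simpa using hnp

lemma p_dvd_expand_sub_pow {σ : Type*} (p : ℕ) (hp : p.Prime) (b : MvPolynomial σ ℤ) :
    ((p : ℕ) : MvPolynomial σ ℤ) ∣ MvPolynomial.expand p b - b ^ p := by
  haveI := Fact.mk hp
  have hq : ∀ r' : ℤ, (Int.castRingHom (ZMod p)) r' = 0 ↔ ((p : ℕ) : ℤ) ∣ r' := by
    intro r'
    simp [ZMod.intCast_zmod_eq_zero_iff_dvd]
  have hC : (MvPolynomial.C (((p : ℕ) : ℤ)) : MvPolynomial σ ℤ) = ((p : ℕ) : MvPolynomial σ ℤ) := by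
    exact map_natCast (MvPolynomial.C : ℤ →+* MvPolynomial σ ℤ) p
  rw [← hC]
  rw [MvPolynomial.C_dvd_iff_map_hom_eq_zero (Int.castRingHom (ZMod p)) _ hq]
  rw [map_sub, map_pow, MvPolynomial.map_expand, MvPolynomial.expand_zmod, sub_self]

/-- The generic matrix. -/
noncomputable def genM (n : ℕ) : Matrix (Fin n) (Fin n) (MvPolynomial (Fin n × Fin n) ℤ) :=
  fun i j => MvPolynomial.X (i, j)

lemma trace_map_ringHom {S S' : Type*} [CommRing S] [CommRing S'] {n : ℕ}
    (φ : S →+* S') (Q : Matrix (Fin n) (Fin n) S) :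
    Matrix.trace (Q.map φ) = φ (Matrix.trace Q) := by
  simp [Matrix.trace, Matrix.diag, Matrix.map_apply, map_sum]

lemma trace_pow_map {S S' : Type*} [CommRing S] [CommRing S'] {n : ℕ}
    (φ : S →+* S') (Q : Matrix (Fin n) (Fin n) S) (m : ℕ) :
    Matrix.trace ((Q.map φ) ^ m) = φ (Matrix.trace (Q ^ m)) := by
  rw [← RingHom.mapMatrix_apply, ← map_pow, RingHom.mapMatrix_apply, trace_map_ringHom]

lemma dwork (p : ℕ) (hp : p.Prime) (n : ℕ) (k : ℕ) :
    ∃ x : ℕ → MvPolynomial (Fin n × Fin n) ℤ,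
      Matrix.trace ((genM n) ^ p ^ k)
        = ∑ i ∈ Finset.range (k + 1),
            ((p : ℕ) : MvPolynomial (Fin n × Fin n) ℤ) ^ i * (x i) ^ (p ^ (k - i)) := by
  induction k with
  | zero =>
      refine ⟨fun _ => Matrix.trace (genM n), ?_⟩
      simp
  | succ k ihk =>
      set B := MvPolynomial (Fin n × Fin n) ℤ with hB
      obtain ⟨x, hx⟩ := ihk
      let φ : B →+* B := (MvPolynomial.expand p : B →ₐ[ℤ] B).toRingHom
      have hφx : ∀ b : B, φ b = MvPolynomial.expand p b := fun _ => rfl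
      have hmapN : (genM n).map (· ^ p) = (genM n).map φ := by
        ext i j
        simp [genM, Matrix.map_apply, hφx, MvPolynomial.expand_X]
      have hneck : ((p ^ (k + 1) : ℕ) : B) ∣
          Matrix.trace ((genM n) ^ p ^ (k + 1)) - φ (Matrix.trace ((genM n) ^ p ^ k)) := by
        have h1 := necklace p hp (genM n) k
        rw [hmapN, trace_pow_map] at h1
        exact h1
      have hφtr : φ (Matrix.trace ((genM n) ^ p ^ k))
          = ∑ i ∈ Finset.range (k + 1), ((p : ℕ) : B) ^ i * (φ (x i)) ^ (p ^ (k - i)) := by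
        rw [hx, map_sum]
        refine Finset.sum_congr rfl fun i _ => ?_
        rw [_root_.map_mul, map_pow, map_pow, map_natCast]
      have hterm : ∀ i ∈ Finset.range (k + 1),
          ((p ^ (k + 1) : ℕ) : B) ∣
            ((p : ℕ) : B) ^ i * ((φ (x i)) ^ (p ^ (k - i)) - (x i) ^ (p ^ (k + 1 - i))) := by
        intro i hi
        rw [Finset.mem_range] at hi
        have h1 : ((p : ℕ) : B) ∣ φ (x i) - (x i) ^ p := by
          rw [hφx]; exact p_dvd_expand_sub_pow p hp (x i)
        have h2 := dvd_sub_pow_of_dvd_sub h1 (k - i)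
        have h3 : ((x i) ^ p) ^ (p ^ (k - i)) = (x i) ^ (p ^ (k + 1 - i)) := by
          rw [← pow_mul]
          congr 1
          rw [← pow_succ']
          congr 1
          omega
        rw [h3] at h2
        have h4 : ((p ^ (k + 1) : ℕ) : B) = ((p : ℕ) : B) ^ i * ((p : ℕ) : B) ^ ((k - i) + 1) := by
          push_cast
          rw [← pow_add]
          congr 1
          omega
        rw [h4]
        exact mul_dvd_mul_left _ h2
      have hdvd2 : ((p ^ (k + 1) : ℕ) : B) ∣
          Matrix.trace ((genM n) ^ p ^ (k + 1))
            - ∑ i ∈ Finset.range (k + 1), ((p : ℕ) : B) ^ i * (x i) ^ (p ^ (k + 1 - i)) := by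
        have heq : Matrix.trace ((genM n) ^ p ^ (k + 1))
              - ∑ i ∈ Finset.range (k + 1), ((p : ℕ) : B) ^ i * (x i) ^ (p ^ (k + 1 - i))
            = (Matrix.trace ((genM n) ^ p ^ (k + 1)) - φ (Matrix.trace ((genM n) ^ p ^ k)))
              + ∑ i ∈ Finset.range (k + 1),
                  ((p : ℕ) : B) ^ i * ((φ (x i)) ^ (p ^ (k - i)) - (x i) ^ (p ^ (k + 1 - i))) := by
          rw [hφtr]
          simp only [mul_sub, Finset.sum_sub_distrib]
          ring
        rw [heq]
        exact dvd_add hneck (Finset.dvd_sum hterm)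
      obtain ⟨cnew, hcnew⟩ := hdvd2
      refine ⟨fun i => if i = k + 1 then cnew else x i, ?_⟩
      rw [Finset.sum_range_succ]
      have hupd : ∀ i ∈ Finset.range (k + 1),
          ((p : ℕ) : B) ^ i * ((if i = k + 1 then cnew else x i) ^ (p ^ (k + 1 - i)))
            = ((p : ℕ) : B) ^ i * ((x i) ^ (p ^ (k + 1 - i))) := by
        intro i hi
        rw [Finset.mem_range] at hi
        rw [if_neg (by omega)]
      rw [Finset.sum_congr rfl hupd]
      beta_reduce
      rw [if_pos rfl, Nat.sub_self, pow_zero, pow_one]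
      push_cast at hcnew ⊢
      linear_combination hcnew

end TracePrimePowerAux

theorem trace_prime_power_form (R : Type*) [CommRing R] (n : ℕ) (hn : 2 ≤ n)
    (M : Matrix (Fin n) (Fin n) R) (p : ℕ) (hp : p.Prime) (s : ℕ) (hs : 1 ≤ s) :
    ∃ x : Fin (s + 1) → R,
      Matrix.trace (M ^ (p ^ s)) =
        ∑ i : Fin (s + 1), (p : R) ^ (i : ℕ) * (x i) ^ (p ^ (s - (i : ℕ))) := by
  classical
  obtain ⟨x, hx⟩ := TracePrimePowerAux.dwork p hp n s
  let ev : MvPolynomial (Fin n × Fin n) ℤ →+* R :=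
    (MvPolynomial.aeval (fun q : Fin n × Fin n => M q.1 q.2) :
      MvPolynomial (Fin n × Fin n) ℤ →ₐ[ℤ] R).toRingHom
  have hNM : (TracePrimePowerAux.genM n).map ev = M := by
    ext i j
    simp [TracePrimePowerAux.genM, Matrix.map_apply, ev]
  refine ⟨fun i => ev (x (i : ℕ)), ?_⟩
  have h1 : Matrix.trace (M ^ p ^ s) = ev (Matrix.trace ((TracePrimePowerAux.genM n) ^ p ^ s)) := by
    rw [← hNM, TracePrimePowerAux.trace_pow_map]
  rw [h1, hx, map_sum]
  rw [show (∑ i ∈ Finset.range (s + 1), ev (((p : ℕ) : MvPolynomial (Fin n × Fin n) ℤ) ^ i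
        * x i ^ p ^ (s - i)))
      = ∑ i ∈ Finset.range (s + 1), (p : R) ^ i * (ev (x i)) ^ (p ^ (s - i)) from
    Finset.sum_congr rfl fun i _ => by rw [_root_.map_mul, map_pow, map_pow, map_natCast]]
  exact (Fin.sum_univ_eq_sum_range (fun i => (p : R) ^ i * (ev (x i)) ^ (p ^ (s - i))) (s + 1)).symm
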